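/- arXiv:0806.4448 — 2 statements merged into one kernel-verified Lean document; each statement's English description precedes it below -/
import Mathlib

section
/- Let S₁,…,Sₙ ∈ ℂ^{m×m} be unitary matrices with Sₙ⋯S₂S₁ = S, and for j ≤ k set S_{k↞j} = S_k S_{k−1}⋯S_j, S_{k↞k} = S_k, S_{k↞k+1} = I_m. Let R ∈ ℝ^{2n×2n} be symmetric with 2×2 blocks R_{jk} satisfying R_{kj} = R_{jk}ᵀ, and let K = [K₁ K₂ … Kₙ] ∈ ℂ^{m×2n} with K_j ∈ ℂ^{m×2}. Set K̃_k = S_{n↞k+1}† K_k and G_j = (S_j, K̃_j x_j, ½ x_jᵀ R_{jj} x_j). Define the direct interaction Hamiltonian H^d = Σ_{j=1}^{n−1} Σ_{k=j+1}^{n} x_kᵀ ( R_{jk}ᵀ − (1/(2i))(K̃_k† S_{k↞j+1} K̃_j − K̃_kᵀ S_{k↞j+1}# K̃_j#) ) x_j. Then the iterated series product (S′, L′, H′) := Gₙ ◁ Gₙ₋₁ ◁ ⋯ ◁ G₁ satisfies S′ = S, L′ = K x, and H′ + H^d = ½ xᵀ R x. (This is the content of the paper's main synthesis theorem at the level of system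 parameter triples.) -/
open Finset Matrix

noncomputable section

variable {A : Type*} [Ring A] [Algebra ℂ A] [StarRing A] [StarModule ℂ A]

/-- Product of a complex matrix with a vector of algebra elements. -/
def mulVecA {ι κ : Type*} [Fintype κ] (M : Matrix ι κ ℂ) (v : κ → A) : ι → A :=
  fun i => ∑ j, M i j • v j

/-- Quadratic-form-style expression `xᵀ M y` with values in the algebra. -/
def quadA {ι κ : Type*} [Fintype ι] [Fintype κ] (x : ι → A) (M : Matrix ι κ ℂ) (y : κ → A) : A :=
  ∑ i, ∑ j, M i j • (x i * y j)

/-- Sesquilinear expression `L† S L'` with values in the algebra. -/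
def sesqA {ι : Type*} [Fintype ι] (L : ι → A) (S : Matrix ι ι ℂ) (L' : ι → A) : A :=
  ∑ i, ∑ j, S i j • (star (L i) * L' j)

/-- Entrywise complex conjugate `M#`. -/
def conjM {ι κ : Type*} (M : Matrix ι κ ℂ) : Matrix ι κ ℂ := M.map (starRingEnd ℂ)

/-- A generalized open oscillator triple `(S, L, H)` with `m` field channels. -/
structure GOO (A : Type*) [Ring A] (m : ℕ) where
  S : Matrix (Fin m) (Fin m) ℂ
  L : Fin m → A
  H : A

/-- The series product `G₂ ◁ G₁`. -/
def seriesProd {m : ℕ} (G2 G1 : GOO A m) : GOO A m where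
  S := G2.S * G1.S
  L := fun i => mulVecA G2.S G1.L i + G2.L i
  H := G1.H + G2.H + (2 * Complex.I)⁻¹ • (sesqA G2.L G2.S G1.L - sesqA G1.L G2.Sᴴ G2.L)

/-- Iterated series product `G k ◁ ⋯ ◁ G 1 ◁ G 0`. -/
def chainG {m : ℕ} (G : ℕ → GOO A m) : ℕ → GOO A m
  | 0 => G 0
  | k + 1 => seriesProd (G (k + 1)) (chainG G k)

/-- `S_{k ↞ j} = S k * S (k-1) * ⋯ * S j` (equal to `1` when `j = k + 1`). -/
def Sprod {m : ℕ} (S : ℕ → Matrix (Fin m) (Fin m) ℂ) (k j : ℕ) : Matrix (Fin m) (Fin m) ℂ :=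
  (((List.range' j (k + 1 - j)).reverse).map S).prod

section AuxLemmas
set_option linter.unusedSectionVars false

lemma mulVecA_comp {ι κ σ : Type*} [Fintype κ] [Fintype σ] (M : Matrix ι κ ℂ)
    (N : Matrix κ σ ℂ) (v : σ → A) : mulVecA M (mulVecA N v) = mulVecA (M * N) v := by
  funext i
  simp only [mulVecA, Matrix.mul_apply, Finset.smul_sum, Finset.sum_smul, smul_smul]
  exact Finset.sum_comm

lemma mulVecA_sum {ι κ γ : Type*} [Fintype κ] (M : Matrix ι κ ℂ) (t : Finset γ)
    (v : γ → κ → A) :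
    mulVecA M (fun j => ∑ k ∈ t, v k j) = fun i => ∑ k ∈ t, mulVecA M (v k) i := by
  funext i
  simp only [mulVecA, Finset.smul_sum]
  exact Finset.sum_comm

lemma sesqA_sum_right {ι γ : Type*} [Fintype ι] (L : ι → A) (S : Matrix ι ι ℂ)
    (t : Finset γ) (v : γ → ι → A) :
    sesqA L S (fun j => ∑ k ∈ t, v k j) = ∑ k ∈ t, sesqA L S (v k) := by
  simp only [sesqA, Finset.mul_sum, Finset.smul_sum]
  have h1 : ∀ i : ι, (∑ j, ∑ k ∈ t, S i j • (star (L i) * v k j))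
      = ∑ k ∈ t, ∑ j, S i j • (star (L i) * v k j) := fun i => Finset.sum_comm
  simp only [h1]
  exact Finset.sum_comm

lemma sesqA_sum_left {ι γ : Type*} [Fintype ι] (L' : ι → A) (S : Matrix ι ι ℂ)
    (t : Finset γ) (v : γ → ι → A) :
    sesqA (fun j => ∑ k ∈ t, v k j) S L' = ∑ k ∈ t, sesqA (v k) S L' := by
  simp only [sesqA, star_sum, Finset.sum_mul, Finset.smul_sum]
  have h1 : ∀ i : ι, (∑ j, ∑ k ∈ t, S i j • (star (v k i) * L' j))
      = ∑ k ∈ t, ∑ j, S i j • (star (v k i) * L' j) := fun i => Finset.sum_comm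
  simp only [h1]
  exact Finset.sum_comm

lemma sesqA_mulVecA {ι κ σ : Type*} [Fintype ι] [Fintype κ] [Fintype σ]
    (Kl : Matrix ι κ ℂ) (S : Matrix ι ι ℂ) (Kr : Matrix ι σ ℂ)
    (x : κ → A) (y : σ → A) (hx : ∀ a, star (x a) = x a) :
    sesqA (mulVecA Kl x) S (mulVecA Kr y) = quadA x (Klᴴ * S * Kr) y := by
  have expand : ∀ i j, star (mulVecA Kl x i) * mulVecA Kr y j
      = ∑ a, ∑ b, ((starRingEnd ℂ) (Kl i a) * Kr j b) • (x a * y b) := by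
    intro i j
    have : star (mulVecA Kl x i) = ∑ a, (starRingEnd ℂ) (Kl i a) • x a := by
      simp only [mulVecA, star_sum, star_smul, hx]; rfl
    rw [this, mulVecA, Finset.sum_mul]
    refine Finset.sum_congr rfl fun a _ => ?_
    rw [Finset.mul_sum]
    refine Finset.sum_congr rfl fun b _ => ?_
    rw [smul_mul_assoc, mul_smul_comm, smul_smul]
  simp only [sesqA, expand, Finset.smul_sum, smul_smul, quadA, Matrix.mul_apply,
    Matrix.conjTranspose_apply, Finset.sum_mul, Finset.sum_smul]
  have h1 : ∀ i : ι, (∑ j, ∑ a, ∑ b, (S i j * ((starRingEnd ℂ) (Kl i a) * Kr j b)) • (x a * y b))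
      = ∑ a, ∑ j, ∑ b, (S i j * ((starRingEnd ℂ) (Kl i a) * Kr j b)) • (x a * y b) :=
    fun i => Finset.sum_comm
  simp only [h1]
  rw [Finset.sum_comm]
  refine Finset.sum_congr rfl fun a _ => ?_
  have h2 : ∀ i : ι, (∑ j, ∑ b, (S i j * ((starRingEnd ℂ) (Kl i a) * Kr j b)) • (x a * y b))
      = ∑ b, ∑ j, (S i j * ((starRingEnd ℂ) (Kl i a) * Kr j b)) • (x a * y b) :=
    fun i => Finset.sum_comm
  simp only [h2]
  refine Finset.sum_comm.trans ?_
  refine Finset.sum_congr rfl fun b _ => ?_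
  refine Finset.sum_comm.trans ?_
  refine Finset.sum_congr rfl fun i _ => ?_
  refine Finset.sum_congr rfl fun j _ => ?_
  congr 1
  simp only [starRingEnd_apply]
  ring

lemma quadA_add {ι κ : Type*} [Fintype ι] [Fintype κ] (x : ι → A) (M N : Matrix ι κ ℂ)
    (y : κ → A) : quadA x (M + N) y = quadA x M y + quadA x N y := by
  simp [quadA, add_smul, Finset.sum_add_distrib]

lemma quadA_sub {ι κ : Type*} [Fintype ι] [Fintype κ] (x : ι → A) (M N : Matrix ι κ ℂ)
    (y : κ → A) : quadA x (M - N) y = quadA x M y - quadA x N y := by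
  simp [quadA, sub_smul, Finset.sum_sub_distrib]

lemma quadA_smul {ι κ : Type*} [Fintype ι] [Fintype κ] (c : ℂ) (x : ι → A)
    (M : Matrix ι κ ℂ) (y : κ → A) : quadA x (c • M) y = c • quadA x M y := by
  simp [quadA, Finset.smul_sum, smul_smul]

lemma quadA_swap {ι κ : Type*} [Fintype ι] [Fintype κ] (x : ι → A) (M : Matrix ι κ ℂ)
    (y : κ → A) (h : ∀ a b, x a * y b = y b * x a) : quadA x M y = quadA y Mᵀ x := by
  rw [quadA, Finset.sum_comm]
  simp [quadA, Matrix.transpose_apply, h]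

lemma conjM_mul {ι κ σ : Type*} [Fintype κ] (M : Matrix ι κ ℂ) (N : Matrix κ σ ℂ) :
    conjM (M * N) = conjM M * conjM N := Matrix.map_mul

lemma transpose_conjT {ι κ : Type*} (M : Matrix ι κ ℂ) : (Mᴴ)ᵀ = conjM M := by
  ext i j; simp [conjM]

lemma Sprod_empty {m : ℕ} (S : ℕ → Matrix (Fin m) (Fin m) ℂ) (k j : ℕ) (h : k + 1 ≤ j) :
    Sprod S k j = 1 := by
  have : k + 1 - j = 0 := by omega
  simp [Sprod, this]

lemma Sprod_succ {m : ℕ} (S : ℕ → Matrix (Fin m) (Fin m) ℂ) (k j : ℕ) (h : j ≤ k + 1) :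
    Sprod S (k + 1) j = S (k + 1) * Sprod S k j := by
  have h1 : k + 1 + 1 - j = (k + 1 - j) + 1 := by omega
  have h2 : j + 1 * (k + 1 - j) = k + 1 := by omega
  rw [Sprod, h1, List.range'_concat, List.reverse_append, h2]
  simp [Sprod]

lemma Sprod_same {m : ℕ} (S : ℕ → Matrix (Fin m) (Fin m) ℂ) (k : ℕ) :
    Sprod S k k = S k := by
  have : k + 1 - k = 1 := by omega
  simp [Sprod, this, List.range'_one]

lemma Sprod_mem {m : ℕ} (S : ℕ → Matrix (Fin m) (Fin m) ℂ) (k j : ℕ)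
    (hS : ∀ i ≤ k, S i ∈ Matrix.unitaryGroup (Fin m) ℂ) :
    Sprod S k j ∈ Matrix.unitaryGroup (Fin m) ℂ := by
  induction k with
  | zero =>
    rcases Nat.eq_zero_or_pos j with hj | hj
    · subst hj; rw [Sprod_same]; exact hS 0 le_rfl
    · rw [Sprod_empty S 0 j hj]; exact one_mem _
  | succ k ih =>
    rcases le_or_gt j (k + 1) with hj | hj
    · rw [Sprod_succ S k j hj]
      exact mul_mem (hS (k + 1) le_rfl) (ih fun i hi => hS i (hi.trans (Nat.le_succ k)))
    · rw [Sprod_empty S (k + 1) j hj]; exact one_mem _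

lemma sum_Icc_step (g : ℕ → ℕ → A) (r : ℕ) :
    ∑ j ∈ Finset.range (r + 1), ∑ k ∈ Finset.Icc (j + 1) (r + 1), g j k
      = (∑ j ∈ Finset.range r, ∑ k ∈ Finset.Icc (j + 1) r, g j k)
        + ∑ j ∈ Finset.range (r + 1), g j (r + 1) := by
  have h1 : ∀ j ∈ Finset.range (r + 1),
      ∑ k ∈ Finset.Icc (j + 1) (r + 1), g j k
        = (∑ k ∈ Finset.Icc (j + 1) r, g j k) + g j (r + 1) := fun j hj =>
    Finset.sum_Icc_succ_top (by simp at hj; omega) _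
  rw [Finset.sum_congr rfl h1, Finset.sum_add_distrib]
  congr 1
  rw [Finset.sum_range_succ]
  have : Finset.Icc (r + 1) r = ∅ := Finset.Icc_eq_empty (by omega)
  simp [this]

lemma sum_square (g : ℕ → ℕ → A) (n : ℕ) :
    ∑ j ∈ Finset.range (n + 1), ∑ k ∈ Finset.range (n + 1), g j k
      = ∑ j ∈ Finset.range (n + 1), g j j
        + ∑ j ∈ Finset.range n, ∑ k ∈ Finset.Icc (j + 1) n, (g j k + g k j) := by
  induction n with
  | zero => simp
  | succ n ih =>
    have hL : ∑ j ∈ Finset.range (n + 2), ∑ k ∈ Finset.range (n + 2), g j k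
        = (∑ j ∈ Finset.range (n + 1), ∑ k ∈ Finset.range (n + 1), g j k)
          + (∑ j ∈ Finset.range (n + 1), g j (n + 1))
          + ((∑ k ∈ Finset.range (n + 1), g (n + 1) k) + g (n + 1) (n + 1)) := by
      rw [Finset.sum_range_succ]
      congr 1
      · refine (Finset.sum_congr rfl fun j _ => Finset.sum_range_succ _ _).trans ?_
        rw [Finset.sum_add_distrib]
      · rw [Finset.sum_range_succ]
    rw [hL, ih, sum_Icc_step (fun j k => g j k + g k j) n,
      Finset.sum_range_succ (fun j => g j j) (n + 1), Finset.sum_add_distrib]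
    abel

end AuxLemmas

set_option maxHeartbeats 1000000 in
/-- The main synthesis theorem: an `n+1` degrees of freedom generalized open
oscillator `G = (Sgoal, K x, ½ xᵀ R x)` is realized by the series chain of the one degree of
freedom oscillators `G k = (S k, K̃ₖ xₖ, ½ xₖᵀ Rₖₖ xₖ)` together with the direct interaction
Hamiltonian `H^d`. -/
theorem stmt0 (m n : ℕ) (q p : ℕ → A)
    (hq : ∀ j ≤ n, IsSelfAdjoint (q j)) (hp : ∀ j ≤ n, IsSelfAdjoint (p j))
    (ccr_qp : ∀ j ≤ n, ∀ k ≤ n,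
      q j * p k - p k * q j = if j = k then (2 * Complex.I) • (1 : A) else 0)
    (ccr_qq : ∀ j ≤ n, ∀ k ≤ n, q j * q k - q k * q j = 0)
    (ccr_pp : ∀ j ≤ n, ∀ k ≤ n, p j * p k - p k * p j = 0)
    (S : ℕ → Matrix (Fin m) (Fin m) ℂ)
    (hS : ∀ k ≤ n, S k ∈ Matrix.unitaryGroup (Fin m) ℂ)
    (Sgoal : Matrix (Fin m) (Fin m) ℂ) (hgoal : Sprod S n 0 = Sgoal)
    (R : ℕ → ℕ → Matrix (Fin 2) (Fin 2) ℝ)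
    (hR : ∀ j ≤ n, ∀ k ≤ n, R k j = (R j k)ᵀ)
    (K Kt : ℕ → Matrix (Fin m) (Fin 2) ℂ)
    (hKt : ∀ k ≤ n, Kt k = (Sprod S n (k + 1))ᴴ * K k)
    (x : ℕ → Fin 2 → A)
    (hx : ∀ j, x j = fun a => if a = 0 then q j else p j)
    (G : ℕ → GOO A m)
    (hG : ∀ k ≤ n, G k = ⟨S k, mulVecA (Kt k) (x k),
        (2 : ℂ)⁻¹ • quadA (x k) ((R k k).map Complex.ofReal) (x k)⟩)
    (Hd : A)
    (hHd : Hd = ∑ j ∈ Finset.range n, ∑ k ∈ Finset.Icc (j + 1) n,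
      quadA (x k)
        (((R j k)ᵀ).map Complex.ofReal -
          (2 * Complex.I)⁻¹ •
            ((Kt k)ᴴ * Sprod S k (j + 1) * Kt j -
             (Kt k)ᵀ * conjM (Sprod S k (j + 1)) * conjM (Kt j)))
        (x j)) :
    (chainG G n).S = Sgoal ∧
    (chainG G n).L = (fun i => ∑ k ∈ Finset.range (n + 1), ∑ a, (K k) i a • x k a) ∧
    (chainG G n).H + Hd =
      (2 : ℂ)⁻¹ • ∑ j ∈ Finset.range (n + 1), ∑ k ∈ Finset.range (n + 1),
        quadA (x j) ((R j k).map Complex.ofReal) (x k) := by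
  -- self-adjointness of the entries of x
  have hxsa : ∀ k ≤ n, ∀ a : Fin 2, star (x k a) = x k a := by
    intro k hk a
    rw [hx]
    by_cases ha : a = 0 <;> simp [ha, (hq k hk).star_eq, (hp k hk).star_eq]
  -- commutation of entries of distinct oscillators
  have hcomm : ∀ j ≤ n, ∀ k ≤ n, j ≠ k → ∀ a b : Fin 2, x j a * x k b = x k b * x j a := by
    intro j hj k hk hjk a b
    have hkj : k ≠ j := fun h => hjk h.symm
    rw [hx j, hx k]
    by_cases ha : a = 0 <;> by_cases hb : b = 0 <;> simp only [ha, hb, if_true, if_false,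
      if_pos, if_neg, ite_true, ite_false]
    · exact sub_eq_zero.mp (ccr_qq j hj k hk)
    · have h := ccr_qp j hj k hk; rw [if_neg hjk] at h; exact sub_eq_zero.mp h
    · have h := ccr_qp k hk j hj; rw [if_neg hkj] at h; exact (sub_eq_zero.mp h).symm
    · exact sub_eq_zero.mp (ccr_pp j hj k hk)
  have key : ∀ r, r ≤ n →
      (chainG G r).S = Sprod S r 0 ∧
      (chainG G r).L
        = (fun i => ∑ k ∈ Finset.range (r + 1),
            mulVecA (Sprod S r (k + 1) * Kt k) (x k) i) ∧
      (chainG G r).H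
        = (∑ k ∈ Finset.range (r + 1),
            (2 : ℂ)⁻¹ • quadA (x k) ((R k k).map Complex.ofReal) (x k))
          + ∑ j ∈ Finset.range r, ∑ k ∈ Finset.Icc (j + 1) r,
              (2 * Complex.I)⁻¹ • quadA (x k)
                ((Kt k)ᴴ * Sprod S k (j + 1) * Kt j -
                 (Kt k)ᵀ * conjM (Sprod S k (j + 1)) * conjM (Kt j)) (x j) := by
    intro r
    induction r with
    | zero =>
      intro _
      have h0 := hG 0 (Nat.zero_le n)
      refine ⟨?_, ?_, ?_⟩
      · simp [chainG, h0, Sprod_same]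
      · funext i
        rw [Finset.sum_range_one, Sprod_empty S 0 1 le_rfl, Matrix.one_mul]
        simp [chainG, h0]
      · simp [chainG, h0, Finset.sum_range_one]
    | succ r ihr =>
      intro hrn
      have hr : r ≤ n := by omega
      obtain ⟨IS, IL, IH⟩ := ihr hr
      have hGr := hG (r + 1) hrn
      refine ⟨?_, ?_, ?_⟩
      · show (G (r + 1)).S * (chainG G r).S = _
        rw [hGr, IS, Sprod_succ S r 0 (by omega)]
      · show (fun i => mulVecA (G (r + 1)).S (chainG G r).L i + (G (r + 1)).L i) = _
        rw [hGr, IL]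
        funext i
        show mulVecA (S (r + 1)) _ i + mulVecA (Kt (r + 1)) (x (r + 1)) i = _
        rw [mulVecA_sum]
        simp only [mulVecA_comp]
        rw [Finset.sum_range_succ (fun k => mulVecA (Sprod S (r + 1) (k + 1) * Kt k) (x k) i)
          (r + 1)]
        congr 1
        · refine Finset.sum_congr rfl fun k hk => ?_
          have hk' : k ≤ r := by simp at hk; omega
          rw [Sprod_succ S r (k + 1) (by omega), Matrix.mul_assoc]
        · rw [Sprod_empty S (r + 1) (r + 2) le_rfl, Matrix.one_mul]
      · show (chainG G r).H + (G (r + 1)).H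
            + (2 * Complex.I)⁻¹ • (sesqA (G (r + 1)).L (G (r + 1)).S (chainG G r).L
              - sesqA (chainG G r).L ((G (r + 1)).S)ᴴ (G (r + 1)).L) = _
        rw [hGr]
        show (chainG G r).H + (2 : ℂ)⁻¹ • quadA (x (r + 1))
              ((R (r + 1) (r + 1)).map Complex.ofReal) (x (r + 1))
            + (2 * Complex.I)⁻¹ •
              (sesqA (mulVecA (Kt (r + 1)) (x (r + 1))) (S (r + 1)) (chainG G r).L
              - sesqA (chainG G r).L ((S (r + 1)))ᴴ (mulVecA (Kt (r + 1)) (x (r + 1)))) = _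
        have hs1 : sesqA (mulVecA (Kt (r + 1)) (x (r + 1))) (S (r + 1)) (chainG G r).L
            = ∑ k ∈ Finset.range (r + 1),
                quadA (x (r + 1)) ((Kt (r + 1))ᴴ * Sprod S (r + 1) (k + 1) * Kt k) (x k) := by
          rw [IL, sesqA_sum_right]
          refine Finset.sum_congr rfl fun k hk => ?_
          have hk' : k ≤ r := by simp at hk; omega
          rw [sesqA_mulVecA _ _ _ _ _ (hxsa (r + 1) hrn)]
          congr 1
          rw [Sprod_succ S r (k + 1) (by omega)]
          simp [Matrix.mul_assoc]
        have hs2 : sesqA (chainG G r).L ((S (r + 1)))ᴴ (mulVecA (Kt (r + 1)) (x (r + 1)))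
            = ∑ k ∈ Finset.range (r + 1),
                quadA (x (r + 1))
                  ((Kt (r + 1))ᵀ * conjM (Sprod S (r + 1) (k + 1)) * conjM (Kt k)) (x k) := by
          rw [IL, sesqA_sum_left]
          refine Finset.sum_congr rfl fun k hk => ?_
          have hk' : k ≤ r := by simp at hk; omega
          rw [sesqA_mulVecA _ _ _ _ _ (hxsa k (hk'.trans hr)),
            quadA_swap _ _ _ (hcomm k (hk'.trans hr) (r + 1) hrn (by omega))]
          congr 1
          rw [Sprod_succ S r (k + 1) (by omega), conjM_mul]
          simp [Matrix.transpose_mul, Matrix.conjTranspose_mul, transpose_conjT, conjM_mul,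
            Matrix.mul_assoc]
        rw [IH, hs1, hs2, ← Finset.sum_sub_distrib, Finset.smul_sum]
        have hterm : ∀ k ∈ Finset.range (r + 1),
            (2 * Complex.I)⁻¹ •
              (quadA (x (r + 1)) ((Kt (r + 1))ᴴ * Sprod S (r + 1) (k + 1) * Kt k) (x k)
              - quadA (x (r + 1))
                  ((Kt (r + 1))ᵀ * conjM (Sprod S (r + 1) (k + 1)) * conjM (Kt k)) (x k))
            = (2 * Complex.I)⁻¹ • quadA (x (r + 1))
                ((Kt (r + 1))ᴴ * Sprod S (r + 1) (k + 1) * Kt k -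
                 (Kt (r + 1))ᵀ * conjM (Sprod S (r + 1) (k + 1)) * conjM (Kt k)) (x k) := by
          intro k _
          rw [quadA_sub]
        rw [Finset.sum_congr rfl hterm,
          Finset.sum_range_succ
            (fun k => (2 : ℂ)⁻¹ • quadA (x k) ((R k k).map Complex.ofReal) (x k)) (r + 1),
          sum_Icc_step
            (fun j k => (2 * Complex.I)⁻¹ • quadA (x k)
              ((Kt k)ᴴ * Sprod S k (j + 1) * Kt j -
               (Kt k)ᵀ * conjM (Sprod S k (j + 1)) * conjM (Kt j)) (x j)) r]
        abel
  obtain ⟨kS, kL, kH⟩ := key n le_rfl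
  refine ⟨by rw [kS, hgoal], ?_, ?_⟩
  · rw [kL]
    funext i
    refine Finset.sum_congr rfl fun k hk => ?_
    have hkn : k ≤ n := by simp at hk; omega
    have hU : Sprod S n (k + 1) ∈ Matrix.unitaryGroup (Fin m) ℂ :=
      Sprod_mem S n (k + 1) (fun i hi => hS i hi)
    have h1 : Sprod S n (k + 1) * (Sprod S n (k + 1))ᴴ = 1 := by
      have := Matrix.mem_unitaryGroup_iff.mp hU
      simpa [Matrix.star_eq_conjTranspose] using this
    have h2 : Sprod S n (k + 1) * Kt k = K k := by
      rw [hKt k hkn, ← Matrix.mul_assoc, h1, Matrix.one_mul]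
    rw [h2]
    rfl
  · rw [kH, hHd]
    have hHd2 : ∀ j ∈ Finset.range n, ∀ k ∈ Finset.Icc (j + 1) n,
        quadA (x k)
          (((R j k)ᵀ).map Complex.ofReal -
            (2 * Complex.I)⁻¹ •
              ((Kt k)ᴴ * Sprod S k (j + 1) * Kt j -
               (Kt k)ᵀ * conjM (Sprod S k (j + 1)) * conjM (Kt j))) (x j)
        = quadA (x k) (((R j k)ᵀ).map Complex.ofReal) (x j)
          - (2 * Complex.I)⁻¹ • quadA (x k)
              ((Kt k)ᴴ * Sprod S k (j + 1) * Kt j -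
               (Kt k)ᵀ * conjM (Sprod S k (j + 1)) * conjM (Kt j)) (x j) := by
      intro j _ k _
      rw [quadA_sub, quadA_smul]
    rw [Finset.sum_congr rfl (fun j hj => Finset.sum_congr rfl (hHd2 j hj))]
    rw [Finset.sum_congr rfl (fun (j : ℕ) (_ : j ∈ Finset.range n) =>
      (Finset.sum_sub_distrib (s := Finset.Icc (j + 1) n) _ _)), Finset.sum_sub_distrib]
    rw [sum_square (fun j k => quadA (x j) ((R j k).map Complex.ofReal) (x k)) n]
    rw [smul_add, Finset.smul_sum, Finset.smul_sum]
    have hdiag : ∀ j ∈ Finset.range (n + 1),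
        (2 : ℂ)⁻¹ • quadA (x j) ((R j j).map Complex.ofReal) (x j)
          = (2 : ℂ)⁻¹ • quadA (x j) ((R j j).map Complex.ofReal) (x j) := fun _ _ => rfl
    have hoff : ∀ j ∈ Finset.range n, ∀ k ∈ Finset.Icc (j + 1) n,
        (2 : ℂ)⁻¹ • (quadA (x j) ((R j k).map Complex.ofReal) (x k)
            + quadA (x k) ((R k j).map Complex.ofReal) (x j))
          = quadA (x k) (((R j k)ᵀ).map Complex.ofReal) (x j) := by
      intro j hj k hk
      simp only [Finset.mem_range] at hj
      simp only [Finset.mem_Icc] at hk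
      have hjn : j ≤ n := by omega
      have hkn : k ≤ n := by omega
      have h1 : quadA (x j) ((R j k).map Complex.ofReal) (x k)
          = quadA (x k) (((R j k)ᵀ).map Complex.ofReal) (x j) := by
        rw [quadA_swap _ _ _ (hcomm j hjn k hkn (by omega)), Matrix.transpose_map]
      have h2 : (R k j) = (R j k)ᵀ := hR j hjn k hkn
      rw [h1, h2]
      rw [← two_smul ℂ (quadA (x k) (((R j k)ᵀ).map Complex.ofReal) (x j)), smul_smul]
      norm_num
    rw [Finset.sum_congr rfl (fun (j : ℕ) (_ : j ∈ Finset.range n) =>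
      (Finset.smul_sum (r := (2 : ℂ)⁻¹)))]
    rw [Finset.sum_congr rfl (fun j hj => Finset.sum_congr rfl (hoff j hj))]
    abel
end
end

section
/- Let G₁ = (S₁, K₁x₁, ½x₁ᵀR₁x₁) and G₂ = (S₂, K₂x₂, ½x₂ᵀR₂x₂) be generalized open oscillator triples with m field channels, built on commuting families of canonical operators x₁ (of 2n₁ self-adjoint components) and x₂ (of 2n₂ self-adjoint components), with R₁, R₂ real symmetric and S₁, S₂ unitary. Let R₁₂ ∈ ℝ^{2n₁×2n₂} and define H^d₁₂ = ½x₁ᵀR₁₂x₂ + ½x₂ᵀR₁₂ᵀx₁ − (1/(2i))(L₂†S₂L₁ − L₁†S₂†L₂), where L_j = K_jx_j. Then the network obtained by forming the series product G₂ ◁ G₁ and adding H^d₁₂ to its Hamiltonian is the generalized open oscillator triple ( S₂S₁, [S₂K₁ K₂] x, ½ xᵀ [[R₁, R₁₂],[R₁₂ᵀ, R₂]] x ), where x = (x₁ᵀ, x₂ᵀ)ᵀ. -/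
open Finset Matrix

noncomputable section

variable {A : Type*} [Ring A] [Algebra ℂ A] [StarRing A] [StarModule ℂ A]

/-- The reducible network formed by the series product `G₂ ◁ G₁` together with
the direct interaction Hamiltonian `H^d₁₂` is the generalized open oscillator triple
`(S₂S₁, [S₂K₁ K₂] x, ½ xᵀ [[R₁,R₁₂],[R₁₂ᵀ,R₂]] x)`. -/
theorem stmt4 (m n1 n2 : ℕ)
    (x1 : Fin (2 * n1) → A) (x2 : Fin (2 * n2) → A)
    (hx1 : ∀ i, IsSelfAdjoint (x1 i)) (hx2 : ∀ i, IsSelfAdjoint (x2 i))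
    (hcomm : ∀ i j, x1 i * x2 j = x2 j * x1 i)
    (S1 S2 : Matrix (Fin m) (Fin m) ℂ)
    (hS1 : S1 ∈ Matrix.unitaryGroup (Fin m) ℂ) (hS2 : S2 ∈ Matrix.unitaryGroup (Fin m) ℂ)
    (K1 : Matrix (Fin m) (Fin (2 * n1)) ℂ) (K2 : Matrix (Fin m) (Fin (2 * n2)) ℂ)
    (R1 : Matrix (Fin (2 * n1)) (Fin (2 * n1)) ℝ) (hR1 : R1ᵀ = R1)
    (R2 : Matrix (Fin (2 * n2)) (Fin (2 * n2)) ℝ) (hR2 : R2ᵀ = R2)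
    (R12 : Matrix (Fin (2 * n1)) (Fin (2 * n2)) ℝ)
    (G1 G2 : GOO A m)
    (hG1 : G1 = ⟨S1, mulVecA K1 x1, (2 : ℂ)⁻¹ • quadA x1 (R1.map Complex.ofReal) x1⟩)
    (hG2 : G2 = ⟨S2, mulVecA K2 x2, (2 : ℂ)⁻¹ • quadA x2 (R2.map Complex.ofReal) x2⟩)
    (Hd : A)
    (hHd : Hd = (2 : ℂ)⁻¹ • quadA x1 (R12.map Complex.ofReal) x2 +
        (2 : ℂ)⁻¹ • quadA x2 ((R12ᵀ).map Complex.ofReal) x1 -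
        (2 * Complex.I)⁻¹ •
          (sesqA (mulVecA K2 x2) S2 (mulVecA K1 x1) -
           sesqA (mulVecA K1 x1) S2ᴴ (mulVecA K2 x2))) :
    (seriesProd G2 G1).S = S2 * S1 ∧
    (seriesProd G2 G1).L = mulVecA (Matrix.fromCols (S2 * K1) K2) (Sum.elim x1 x2) ∧
    (seriesProd G2 G1).H + Hd =
      (2 : ℂ)⁻¹ • quadA (Sum.elim x1 x2)
        ((Matrix.fromBlocks R1 R12 R12ᵀ R2).map Complex.ofReal) (Sum.elim x1 x2) := by
  subst hG1 hG2 hHd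
  refine ⟨rfl, ?_, ?_⟩
  · funext i
    simp only [seriesProd, mulVecA, Matrix.fromCols, Fintype.sum_sum_type,
      Sum.elim_inl, Sum.elim_inr, Matrix.of_apply, Matrix.mul_apply,
      Finset.smul_sum, smul_smul, Finset.sum_smul]
    rw [Finset.sum_comm]
  · simp only [seriesProd, quadA, Matrix.fromBlocks, Fintype.sum_sum_type,
      Sum.elim_inl, Sum.elim_inr, Matrix.of_apply, Sum.elim_inl, Sum.elim_inr,
      Matrix.map_apply, Matrix.transpose_apply, Finset.sum_add_distrib, smul_add]
    abel
end
end
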